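/- arXiv:math/0603081 — 2 statements merged into one kernel-verified Lean document; each statement's English description precedes it below -/
import Mathlib

section
/- Every element of the module H is of the form f · v_0 where f lies in the unital subalgebra of Pol(Mat_n)_q generated by the elements z_a^α (a,α=1,…,n); i.e. the linear map f ↦ f·v_0 from this subalgebra (isomorphic to ℂ[Mat_n]_q) onto H is surjective. -/
noncomputable section
open scoped BigOperators

/-- Generators of the algebra `ℂ[Mat_n ⊕ Mat̄_n]_q`: `z a α` and `zs a α = (z a α)*`. -/
inductive PolGen (n : ℕ) : Type
  | z (a α : Fin n)
  | zs (a α : Fin n)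

/-- The free algebra on the generators. -/
abbrev FreePol (n : ℕ) := FreeAlgebra ℂ (PolGen n)

def gz {n : ℕ} (a α : Fin n) : FreePol n := FreeAlgebra.ι ℂ (PolGen.z a α)
def gzs {n : ℕ} (a α : Fin n) : FreePol n := FreeAlgebra.ι ℂ (PolGen.zs a α)

/-- The R-matrix entries. -/
def Rmat (q : ℝ) {n : ℕ} (j i j' i' : Fin n) : ℂ :=
  if i ≠ j ∧ j = j' ∧ i = i' then (q : ℂ)⁻¹
  else if i = j ∧ j = j' ∧ i = i' then 1
  else if i = j ∧ i' = j' ∧ i < i' then -((q : ℂ)⁻¹ ^ 2 - 1)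
  else 0

/-- The defining relations of `ℂ[Mat_n ⊕ Mat̄_n]_q`. -/
inductive PolRel (q : ℝ) (n : ℕ) : FreePol n → FreePol n → Prop
  | zz_q (a b α β : Fin n) : (a = b ∧ α < β) ∨ (a < b ∧ α = β) →
      PolRel q n (gz a α * gz b β) ((q : ℂ) • (gz b β * gz a α))
  | zz_comm (a b α β : Fin n) : α < β → b < a →
      PolRel q n (gz a α * gz b β) (gz b β * gz a α)
  | zz_mix (a b α β : Fin n) : α < β → a < b →
      PolRel q n (gz a α * gz b β)
        (gz b β * gz a α + ((q : ℂ) - (q : ℂ)⁻¹) • (gz a β * gz b α))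
  | zszs_q (a b α β : Fin n) : (a = b ∧ α < β) ∨ (a < b ∧ α = β) →
      PolRel q n (gzs b β * gzs a α) ((q : ℂ) • (gzs a α * gzs b β))
  | zszs_comm (a b α β : Fin n) : α < β → b < a →
      PolRel q n (gzs b β * gzs a α) (gzs a α * gzs b β)
  | zszs_mix (a b α β : Fin n) : α < β → a < b →
      PolRel q n (gzs b β * gzs a α)
        (gzs a α * gzs b β + ((q : ℂ) - (q : ℂ)⁻¹) • (gzs b α * gzs a β))
  | cross (a b α β : Fin n) :
      PolRel q n (gzs b β * gz a α)
        ((q : ℂ) ^ 2 • (∑ a' : Fin n, ∑ b' : Fin n, ∑ α' : Fin n, ∑ β' : Fin n,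
            (Rmat q b a b' a' * Rmat q β α β' α') • (gz a' α' * gzs b' β'))
          + ((1 - (q : ℂ) ^ 2) * (if a = b then 1 else 0) *
              (if α = β then 1 else 0)) • (1 : FreePol n))

/-- The algebra `Pol(Mat_n)_q = ℂ[Mat_n ⊕ Mat̄_n]_q`. -/
abbrev PolMat (q : ℝ) (n : ℕ) := RingQuot (PolRel q n)

/-- The generator `z_a^α`. -/
def Z (q : ℝ) (n : ℕ) (a α : Fin n) : PolMat q n :=
  RingQuot.mkAlgHom ℂ (PolRel q n) (gz a α)

/-- The generator `(z_a^α)*`. -/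
def Zs (q : ℝ) (n : ℕ) (a α : Fin n) : PolMat q n :=
  RingQuot.mkAlgHom ℂ (PolRel q n) (gzs a α)

/-- Number of inversions of a permutation of `Fin k`. -/
def invCount {k : ℕ} (s : Equiv.Perm (Fin k)) : ℕ :=
  (Finset.univ.filter (fun p : Fin k × Fin k => p.1 < p.2 ∧ s p.2 < s p.1)).card

/-- The quantum minor `z^{∧k}_{I,J}` for index maps `I J : Fin k → Fin n`
(used with strictly increasing `I`, `J`). -/
def zMinor (q : ℝ) (n : ℕ) {k : ℕ} (I J : Fin k → Fin n) : PolMat q n :=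
  ∑ s : Equiv.Perm (Fin k),
    ((-(q : ℂ)) ^ invCount s) • (List.ofFn fun m => Z q n (I m) (J (s m))).prod

/-- `(z^{∧k}_{I,J})*` : the star of the quantum minor, written out explicitly
(star reverses products and fixes the real coefficients `(-q)^{l(s)}`). -/
def zsMinor (q : ℝ) (n : ℕ) {k : ℕ} (I J : Fin k → Fin n) : PolMat q n :=
  ∑ s : Equiv.Perm (Fin k),
    ((-(q : ℂ)) ^ invCount s) • ((List.ofFn fun m => Zs q n (I m) (J (s m))).reverse).prod

/-- Increasing enumeration of a finite subset of `Fin n`. -/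
def enumF {n : ℕ} (S : Finset (Fin n)) : Fin S.card → Fin n :=
  fun m => ((S.orderIsoOfFin rfl) m).1

/-- Quantum minor with rows and columns given by finite sets. -/
def zMinorS (q : ℝ) (n : ℕ) (I J : Finset (Fin n)) : PolMat q n :=
  if h : J.card = I.card then
    zMinor q n (enumF I) (fun m => enumF J (Fin.cast h.symm m))
  else 0

/-- Star of the quantum minor with rows and columns given by finite sets. -/
def zsMinorS (q : ℝ) (n : ℕ) (I J : Finset (Fin n)) : PolMat q n :=
  if h : J.card = I.card then
    zsMinor q n (enumF I) (fun m => enumF J (Fin.cast h.symm m))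
  else 0

/-- The element `y_k = Σ_{J',J''} z^{∧k}_{J'',J'} (z^{∧k}_{J'',J'})*`. -/
def yElt (q : ℝ) (n : ℕ) (k : ℕ) : PolMat q n :=
  ∑ J' ∈ Finset.powersetCard k (Finset.univ : Finset (Fin n)),
    ∑ J'' ∈ Finset.powersetCard k (Finset.univ : Finset (Fin n)),
      zMinorS q n J'' J' * zsMinorS q n J'' J'

/-- The left ideal generated by the elements `(z_a^α)*`. -/
def lId (q : ℝ) (n : ℕ) : Submodule (PolMat q n) (PolMat q n) :=
  Submodule.span (PolMat q n) {x : PolMat q n | ∃ a α : Fin n, x = Zs q n a α}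

/-- The module `H = Pol(Mat_n)_q / (left ideal generated by the `(z_a^α)*`)`,
i.e. the module with one generator `v₀` and relations `(z_a^α)* v₀ = 0`. -/
abbrev HModF (q : ℝ) (n : ℕ) := PolMat q n ⧸ lId q n

/-- The cyclic vector `v₀ ∈ H`. -/
def v0 (q : ℝ) (n : ℕ) : HModF q n := Submodule.Quotient.mk 1

/-- The quantum determinant `det_q z`. -/
def detqZ (q : ℝ) (n : ℕ) : PolMat q n := zMinor q n (fun i => i) (fun i => i)

/-- The highest weight vector
`u_λ = (det_q z)^{λ_n} ∏_{j=1}^{n-1} (z^{∧j}_{{1..j},{1..j}})^{λ_j−λ_{j+1}} v₀`. -/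
def uLam (q : ℝ) (n : ℕ) (hn : 0 < n) (lam : Fin n → ℤ) : HModF q n :=
  ((detqZ q n ^ (lam ⟨n - 1, by omega⟩).toNat) *
    (List.ofFn (fun j : Fin (n - 1) =>
      (zMinor q n (Fin.castLE (by have := j.isLt; omega : (j : ℕ) + 1 ≤ n))
        (Fin.castLE (by have := j.isLt; omega : (j : ℕ) + 1 ≤ n))) ^
        ((lam ⟨(j : ℕ), by have := j.isLt; omega⟩ -
          lam ⟨(j : ℕ) + 1, by have := j.isLt; omega⟩).toNat))).prod) • v0 q n

/-- The `q`-factorial Schur polynomial `s_ν(x₁,…,x_n; p)`, evaluated at a point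
(`ν_j + n - j` factors in column `j`, in 1-indexed terms). -/
def qSchurVal (n : ℕ) (ν : Fin n → ℕ) (x : Fin n → ℂ) (p : ℂ) : ℂ :=
  (Matrix.det (Matrix.of fun i j : Fin n =>
      ∏ m ∈ Finset.range (ν j + (n - 1 - (j : ℕ))), (x i - p ^ m))) /
    ∏ pr ∈ Finset.univ.filter (fun pr : Fin n × Fin n => pr.1 < pr.2), (x pr.1 - x pr.2)

/-- The partition `1^k`. -/
def onePart (n k : ℕ) : Fin n → ℕ := fun j => if (j : ℕ) < k then 1 else 0


-- test cross relation
lemma cross_eq (q : ℝ) (n : ℕ) (a b α β : Fin n) :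
    Zs q n b β * Z q n a α =
      (q:ℂ)^2 • (∑ a' : Fin n, ∑ b' : Fin n, ∑ α' : Fin n, ∑ β' : Fin n,
          (Rmat q b a b' a' * Rmat q β α β' α') • (Z q n a' α' * Zs q n b' β'))
      + ((1 - (q:ℂ)^2) * (if a = b then 1 else 0) * (if α = β then 1 else 0)) • 1 := by
  have h := RingQuot.mkAlgHom_rel ℂ (PolRel.cross (q := q) (n := n) a b α β)
  simpa [Z, Zs, map_mul, map_add, map_smul, map_sum, map_one, map_zero, apply_ite (RingQuot.mkAlgHom ℂ (PolRel q n)), mul_ite, ite_mul, mul_one, mul_zero, zero_mul, one_mul, ite_smul, zero_smul, one_smul] using h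

section Main
variable (q : ℝ) (n : ℕ)

abbrev Asub : Subalgebra ℂ (PolMat q n) :=
  Algebra.adjoin ℂ (Set.range fun p : Fin n × Fin n => Z q n p.1 p.2)
abbrev Bsub : Subalgebra ℂ (PolMat q n) :=
  Algebra.adjoin ℂ (Set.range fun p : Fin n × Fin n => Zs q n p.1 p.2)

lemma Z_mem_A (a α : Fin n) : Z q n a α ∈ Asub q n :=
  Algebra.subset_adjoin ⟨(a, α), rfl⟩

lemma Zs_mem_B (a α : Fin n) : Zs q n a α ∈ Bsub q n :=
  Algebra.subset_adjoin ⟨(a, α), rfl⟩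

/-- `U = A + A·Zs` as a ℂ-submodule. -/
def Usub : Submodule ℂ (PolMat q n) :=
  Submodule.span ℂ {x | (x ∈ Asub q n) ∨ ∃ g ∈ Asub q n, ∃ a α : Fin n, x = g * Zs q n a α}

/-- `T = span(A·B)`. -/
def Tsub : Submodule ℂ (PolMat q n) :=
  Submodule.span ℂ {x | ∃ g ∈ Asub q n, ∃ b ∈ Bsub q n, x = g * b}

lemma A_mul_U {g u : PolMat q n} (hg : g ∈ Asub q n) (hu : u ∈ Usub q n) :
    g * u ∈ Usub q n := by
  induction hu using Submodule.span_induction with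
  | mem x hx =>
    rcases hx with hx | ⟨g', hg', a, α, rfl⟩
    · exact Submodule.subset_span (Or.inl (mul_mem hg hx))
    · exact Submodule.subset_span (Or.inr ⟨g * g', mul_mem hg hg', a, α, (mul_assoc _ _ _).symm⟩)
  | zero => simpa using (Usub q n).zero_mem
  | add x y _ _ hx hy => rw [mul_add]; exact add_mem hx hy
  | smul c x _ hx => rw [mul_smul_comm]; exact Submodule.smul_mem _ _ hx

lemma Zs_mul_A {g : PolMat q n} (hg : g ∈ Asub q n) :
    ∀ a α : Fin n, Zs q n a α * g ∈ Usub q n := by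
  induction hg using Algebra.adjoin_induction with
  | mem x hx =>
    intro a α
    obtain ⟨⟨c, γ⟩, rfl⟩ := hx
    rw [cross_eq]
    refine add_mem (Submodule.smul_mem _ _ ?_) (Submodule.smul_mem _ _
      (Submodule.subset_span (Or.inl (one_mem _))))
    refine Submodule.sum_mem _ fun a' _ => Submodule.sum_mem _ fun b' _ =>
      Submodule.sum_mem _ fun α' _ => Submodule.sum_mem _ fun β' _ =>
      Submodule.smul_mem _ _ ?_
    exact Submodule.subset_span (Or.inr ⟨Z q n a' α', Z_mem_A q n a' α', b', β', rfl⟩)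
  | algebraMap r =>
    intro a α
    rw [← Algebra.commutes r (Zs q n a α), ← Algebra.smul_def]
    exact Submodule.smul_mem _ _
      (Submodule.subset_span (Or.inr ⟨1, one_mem _, a, α, (one_mul _).symm⟩))
  | add x y hx hy ihx ihy =>
    intro a α
    rw [mul_add]; exact add_mem (ihx a α) (ihy a α)
  | mul x y hx hy ihx ihy =>
    intro a α
    rw [← mul_assoc]
    have key : ∀ u ∈ Usub q n, u * y ∈ Usub q n := by
      intro u hu
      induction hu using Submodule.span_induction with
      | mem t ht =>
        rcases ht with ht | ⟨g', hg', a', α', rfl⟩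
        · exact Submodule.subset_span (Or.inl (mul_mem ht hy))
        · rw [mul_assoc]; exact A_mul_U q n hg' (ihy a' α')
      | zero => simpa using (Usub q n).zero_mem
      | add s t _ _ hs ht => rw [add_mul]; exact add_mem hs ht
      | smul c t _ ht => rw [smul_mul_assoc]; exact Submodule.smul_mem _ _ ht
    exact key _ (ihx a α)

lemma U_le_T : Usub q n ≤ Tsub q n := by
  refine Submodule.span_le.2 ?_
  rintro x (hx | ⟨g, hg, a, α, rfl⟩)
  · exact Submodule.subset_span ⟨x, hx, 1, one_mem _, (mul_one x).symm⟩
  · exact Submodule.subset_span ⟨g, hg, Zs q n a α, Zs_mem_B q n a α, rfl⟩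

lemma T_mul_B {t b : PolMat q n} (ht : t ∈ Tsub q n) (hb : b ∈ Bsub q n) :
    t * b ∈ Tsub q n := by
  induction ht using Submodule.span_induction with
  | mem x hx =>
    obtain ⟨g, hg, b', hb', rfl⟩ := hx
    exact Submodule.subset_span ⟨g, hg, b' * b, mul_mem hb' hb, mul_assoc _ _ _⟩
  | zero => simpa using (Tsub q n).zero_mem
  | add s u _ _ hs hu => rw [add_mul]; exact add_mem hs hu
  | smul c u _ hu => rw [smul_mul_assoc]; exact Submodule.smul_mem _ _ hu

lemma B_mul_A {b : PolMat q n} (hb : b ∈ Bsub q n) :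
    ∀ g ∈ Asub q n, b * g ∈ Tsub q n := by
  induction hb using Algebra.adjoin_induction with
  | mem x hx =>
    intro g hg
    obtain ⟨⟨a, α⟩, rfl⟩ := hx
    exact U_le_T q n (Zs_mul_A q n hg a α)
  | algebraMap r =>
    intro g hg
    rw [← Algebra.smul_def]
    exact Submodule.smul_mem _ _
      (Submodule.subset_span ⟨g, hg, 1, one_mem _, (mul_one g).symm⟩)
  | add x y hx hy ihx ihy =>
    intro g hg
    rw [add_mul]; exact add_mem (ihx g hg) (ihy g hg)
  | mul x y hx hy ihx ihy =>
    intro g hg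
    rw [mul_assoc]
    have key : ∀ t ∈ Tsub q n, x * t ∈ Tsub q n := by
      intro t ht
      induction ht using Submodule.span_induction with
      | mem u hu =>
        obtain ⟨g', hg', b', hb', rfl⟩ := hu
        rw [← mul_assoc]
        exact T_mul_B q n (ihx g' hg') hb'
      | zero => simpa using (Tsub q n).zero_mem
      | add s u _ _ hs hu => rw [mul_add]; exact add_mem hs hu
      | smul c u _ hu => rw [mul_smul_comm]; exact Submodule.smul_mem _ _ hu
    exact key _ (ihy g hg)

lemma A_mul_T {g t : PolMat q n} (hg : g ∈ Asub q n) (ht : t ∈ Tsub q n) :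
    g * t ∈ Tsub q n := by
  induction ht using Submodule.span_induction with
  | mem x hx =>
    obtain ⟨g', hg', b', hb', rfl⟩ := hx
    exact Submodule.subset_span ⟨g * g', mul_mem hg hg', b', hb', (mul_assoc _ _ _).symm⟩
  | zero => simpa using (Tsub q n).zero_mem
  | add s u _ _ hs hu => rw [mul_add]; exact add_mem hs hu
  | smul c u _ hu => rw [mul_smul_comm]; exact Submodule.smul_mem _ _ hu

lemma mul_T_mem (x : PolMat q n) : ∀ t ∈ Tsub q n, x * t ∈ Tsub q n := by
  obtain ⟨y, rfl⟩ := RingQuot.mkAlgHom_surjective ℂ (PolRel q n) x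
  induction y using FreeAlgebra.induction with
  | grade0 r =>
    intro t ht
    rw [AlgHom.commutes, ← Algebra.smul_def]
    exact Submodule.smul_mem _ _ ht
  | grade1 p =>
    cases p with
    | z a α =>
      intro t ht
      exact A_mul_T q n (Z_mem_A q n a α) ht
    | zs a α =>
      intro t ht
      induction ht using Submodule.span_induction with
      | mem u hu =>
        obtain ⟨g', hg', b', hb', rfl⟩ := hu
        rw [← mul_assoc]
        exact T_mul_B q n (U_le_T q n (Zs_mul_A q n hg' a α)) hb'
      | zero => simpa using (Tsub q n).zero_mem
      | add s u _ _ hs hu => rw [mul_add]; exact add_mem hs hu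
      | smul c u _ hu => rw [mul_smul_comm]; exact Submodule.smul_mem _ _ hu
  | mul x y ihx ihy =>
    intro t ht
    rw [map_mul, mul_assoc]
    exact ihx _ (ihy _ ht)
  | add x y ihx ihy =>
    intro t ht
    rw [map_add, add_mul]
    exact add_mem (ihx _ ht) (ihy _ ht)

lemma mem_T (x : PolMat q n) : x ∈ Tsub q n := by
  simpa using mul_T_mem q n x 1
    (Submodule.subset_span ⟨1, one_mem _, 1, one_mem _, (mul_one 1).symm⟩)

lemma B_const {b : PolMat q n} (hb : b ∈ Bsub q n) :
    ∃ c : ℂ, b - c • 1 ∈ lId q n := by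
  induction hb using Algebra.adjoin_induction with
  | mem x hx =>
    obtain ⟨⟨a, α⟩, rfl⟩ := hx
    refine ⟨0, ?_⟩
    simp only [zero_smul, sub_zero]
    exact Submodule.subset_span ⟨a, α, rfl⟩
  | algebraMap r =>
    exact ⟨r, by simp [Algebra.algebraMap_eq_smul_one]⟩
  | add x y hx hy ihx ihy =>
    obtain ⟨c1, h1⟩ := ihx; obtain ⟨c2, h2⟩ := ihy
    refine ⟨c1 + c2, ?_⟩
    have : x + y - (c1 + c2) • 1 = (x - c1 • 1) + (y - c2 • 1) := by
      rw [add_smul]; abel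
    rw [this]; exact add_mem h1 h2
  | mul x y hx hy ihx ihy =>
    obtain ⟨c1, h1⟩ := ihx; obtain ⟨c2, h2⟩ := ihy
    refine ⟨c1 * c2, ?_⟩
    have : x * y - (c1 * c2) • 1 = x * (y - c2 • 1) + c2 • (x - c1 • 1) := by
      rw [mul_sub, smul_sub, mul_smul_comm, mul_one, smul_smul, mul_comm c2 c1]
      abel
    rw [this]
    refine add_mem ?_ ?_
    · have := (lId q n).smul_mem x h2
      simpa [smul_eq_mul] using this
    · have := (lId q n).smul_mem (algebraMap ℂ (PolMat q n) c2) h1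
      simpa [Algebra.smul_def] using this

end Main

/-- Every element of `H` is of the form `f · v₀` with `f` in the unital
subalgebra of `Pol(Mat_n)_q` generated by the `z_a^α`. -/
theorem H_generated_by_holomorphic (q : ℝ) (hq0 : 0 < q) (hq1 : q < 1) (n : ℕ) :
    ∀ v : HModF q n, ∃ f : PolMat q n,
      f ∈ Algebra.adjoin ℂ (Set.range fun p : Fin n × Fin n => Z q n p.1 p.2) ∧
        f • v0 q n = v := by
  intro v
  obtain ⟨x, rfl⟩ := Submodule.Quotient.mk_surjective (lId q n) v
  have hx := mem_T q n x
  have key : ∃ f ∈ Asub q n, x - f ∈ lId q n := by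
    induction hx using Submodule.span_induction with
    | mem t ht =>
      obtain ⟨g, hg, b, hb, rfl⟩ := ht
      obtain ⟨c, hc⟩ := B_const q n hb
      refine ⟨c • g, Submodule.smul_mem (Asub q n).toSubmodule c hg, ?_⟩
      have heq : g * b - c • g = g * (b - c • 1) := by
        rw [mul_sub, mul_smul_comm, mul_one]
      rw [heq]
      have := (lId q n).smul_mem g hc
      simpa [smul_eq_mul] using this
    | zero => exact ⟨0, zero_mem _, by simp⟩
    | add s t _ _ ihs iht =>
      obtain ⟨f1, hf1, h1⟩ := ihs; obtain ⟨f2, hf2, h2⟩ := iht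
      refine ⟨f1 + f2, add_mem hf1 hf2, ?_⟩
      have : s + t - (f1 + f2) = (s - f1) + (t - f2) := by abel
      rw [this]; exact add_mem h1 h2
    | smul c t _ iht =>
      obtain ⟨f, hf, h⟩ := iht
      refine ⟨c • f, Submodule.smul_mem (Asub q n).toSubmodule c hf, ?_⟩
      rw [← smul_sub]
      have := (lId q n).smul_mem (algebraMap ℂ (PolMat q n) c) h
      simpa [Algebra.smul_def, smul_eq_mul] using this
  obtain ⟨f, hf, hfi⟩ := key
  refine ⟨f, hf, ?_⟩
  rw [v0, ← Submodule.Quotient.mk_smul, smul_eq_mul, mul_one]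
  exact (Submodule.Quotient.eq _).2 (by simpa using neg_mem hfi)

end
end

section
/- For n > 1, the assignment J_n: z_a^α ↦ q^{−1} z_a^α for 1 ≤ α ≤ n−1 and 1 ≤ a ≤ n−1, z_n^n ↦ 1, and z_a^α ↦ 0 for all other generators (together with the conjugate assignment on the starred generators), extends uniquely to a homomorphism of unital *-algebras J_n: Pol(Mat_n)_q → Pol(Mat_{n−1})_q. -/
noncomputable section
open scoped BigOperators

lemma sum3_delta {M : Type} [AddCommMonoid M] {n : ℕ} (a0 b0 : Fin n) (P : Fin n → Prop)
    [DecidablePred P] (g : Fin n → Fin n → Fin n → M) :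
    (∑ x : Fin n, ∑ x1 : Fin n, ∑ x2 : Fin n,
        if P x2 then if x1 = b0 then if x = a0 then g x x1 x2 else 0 else 0 else 0)
    = ∑ x2 : Fin n, if P x2 then g a0 b0 x2 else 0 := by
  have h : ∀ x x1 x2 : Fin n,
      (if P x2 then if x1 = b0 then if x = a0 then g x x1 x2 else 0 else 0 else 0)
      = (if x1 = b0 then if x = a0 then (if P x2 then g x x1 x2 else 0) else 0 else 0) := by
    intros; split_ifs <;> rfl
  simp_rw [h, Finset.sum_ite_irrel, Finset.sum_const_zero, Finset.sum_ite_eq',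
    Finset.mem_univ, if_true]
  simp

lemma sum3_diag {M : Type} [AddCommMonoid M] {n : ℕ} (P Q : Fin n → Prop)
    [DecidablePred P] [DecidablePred Q] (g : Fin n → Fin n → Fin n → M) :
    (∑ x : Fin n, ∑ x1 : Fin n, ∑ x2 : Fin n,
        if P x2 then if x = x1 then if Q x then g x x1 x2 else 0 else 0 else 0)
    = ∑ x : Fin n, if Q x then (∑ x2 : Fin n, if P x2 then g x x x2 else 0) else 0 := by
  have h : ∀ x x1 x2 : Fin n,
      (if P x2 then if x = x1 then if Q x then g x x1 x2 else 0 else 0 else 0)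
      = (if x = x1 then if Q x then (if P x2 then g x x1 x2 else 0) else 0 else 0) := by
    intros; split_ifs <;> rfl
  simp_rw [h, Finset.sum_ite_irrel, Finset.sum_const_zero, Finset.sum_ite_eq,
    Finset.mem_univ, if_true]
lemma Rmat_cases (q : ℝ) {n : ℕ} (j i j' i' : Fin n) :
    Rmat q j i j' i' =
      (if j' = j ∧ i' = i then (if i = j then 1 else (q:ℂ)⁻¹) else 0)
      + (if i = j ∧ i' = j' ∧ i < i' then -((q:ℂ)⁻¹ ^ 2 - 1) else 0) := by
  unfold Rmat
  split_ifs <;>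
    simp only [Fin.ext_iff, Fin.lt_def, ne_eq, not_and, not_lt, not_not] at * <;>
    first | ring1 | (exfalso; omega)
section Master
variable (q : ℝ) {n : ℕ} {M : Type} [AddCommMonoid M] [Module ℂ M]

lemma pieceA (a b α β : Fin n) (f : Fin n → Fin n → Fin n → Fin n → M) :
    (∑ a' : Fin n, ∑ b' : Fin n, ∑ α' : Fin n, ∑ β' : Fin n,
        ((if b' = b ∧ a' = a then (if a = b then (1:ℂ) else (q:ℂ)⁻¹) else 0) *
         (if β' = β ∧ α' = α then (if α = β then (1:ℂ) else (q:ℂ)⁻¹) else 0)) • f a' b' α' β')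
    = ((if a = b then (1:ℂ) else (q:ℂ)⁻¹) * (if α = β then (1:ℂ) else (q:ℂ)⁻¹)) • f a b α β := by
  by_cases hab : a = b <;> by_cases hαβ : α = β <;>
    simp [hab, hαβ, ite_and, mul_ite, ite_mul, zero_mul, mul_zero, ite_smul, zero_smul,
      Finset.sum_ite_eq, Finset.sum_ite_eq']

lemma pieceB (a b α β : Fin n) (f : Fin n → Fin n → Fin n → Fin n → M) :
    (∑ a' : Fin n, ∑ b' : Fin n, ∑ α' : Fin n, ∑ β' : Fin n,
        ((if b' = b ∧ a' = a then (if a = b then (1:ℂ) else (q:ℂ)⁻¹) else 0) *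
         (if α = β ∧ α' = β' ∧ α < α' then -((q:ℂ)⁻¹ ^ 2 - 1) else 0)) • f a' b' α' β')
    = (if α = β then (1:ℂ) else 0) •
        ∑ γ : Fin n, (if α < γ then
          ((if a = b then (1:ℂ) else (q:ℂ)⁻¹) * -((q:ℂ)⁻¹ ^ 2 - 1)) • f a b γ γ else 0) := by
  by_cases hab : a = b <;> by_cases hαβ : α = β <;>
    simp [hab, hαβ, ite_and, mul_ite, ite_mul, zero_mul, mul_zero, ite_smul, zero_smul,
      Finset.sum_ite_eq, Finset.sum_ite_eq', Finset.sum_ite_irrel, Finset.sum_const_zero,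
      sum3_delta, sum3_diag]

lemma pieceC (a b α β : Fin n) (f : Fin n → Fin n → Fin n → Fin n → M) :
    (∑ a' : Fin n, ∑ b' : Fin n, ∑ α' : Fin n, ∑ β' : Fin n,
        ((if a = b ∧ a' = b' ∧ a < a' then -((q:ℂ)⁻¹ ^ 2 - 1) else 0) *
         (if β' = β ∧ α' = α then (if α = β then (1:ℂ) else (q:ℂ)⁻¹) else 0)) • f a' b' α' β')
    = (if a = b then (1:ℂ) else 0) •
        ∑ c : Fin n, (if a < c then
          (-((q:ℂ)⁻¹ ^ 2 - 1) * (if α = β then (1:ℂ) else (q:ℂ)⁻¹)) • f c c α β else 0) := by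
  by_cases hab : a = b <;> by_cases hαβ : α = β <;>
    simp [hab, hαβ, ite_and, mul_ite, ite_mul, zero_mul, mul_zero, ite_smul, zero_smul,
      Finset.sum_ite_eq, Finset.sum_ite_eq']

lemma pieceD (a b α β : Fin n) (f : Fin n → Fin n → Fin n → Fin n → M) :
    (∑ a' : Fin n, ∑ b' : Fin n, ∑ α' : Fin n, ∑ β' : Fin n,
        ((if a = b ∧ a' = b' ∧ a < a' then -((q:ℂ)⁻¹ ^ 2 - 1) else 0) *
         (if α = β ∧ α' = β' ∧ α < α' then -((q:ℂ)⁻¹ ^ 2 - 1) else 0)) • f a' b' α' β')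
    = (if a = b ∧ α = β then (1:ℂ) else 0) •
        ∑ c : Fin n, ∑ γ : Fin n, (if a < c ∧ α < γ then
          (-((q:ℂ)⁻¹ ^ 2 - 1) * -((q:ℂ)⁻¹ ^ 2 - 1)) • f c c γ γ else 0) := by
  by_cases hab : a = b <;> by_cases hαβ : α = β <;>
    simp [hab, hαβ, ite_and, mul_ite, ite_mul, zero_mul, mul_zero, ite_smul, zero_smul,
      Finset.sum_ite_eq, Finset.sum_ite_eq', Finset.sum_ite_irrel, Finset.sum_const_zero,
      sum3_delta, sum3_diag]

lemma sum_R_contract (a b α β : Fin n) (f : Fin n → Fin n → Fin n → Fin n → M) :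
    (∑ a' : Fin n, ∑ b' : Fin n, ∑ α' : Fin n, ∑ β' : Fin n,
        (Rmat q b a b' a' * Rmat q β α β' α') • f a' b' α' β')
    = ((if a = b then (1:ℂ) else (q:ℂ)⁻¹) * (if α = β then (1:ℂ) else (q:ℂ)⁻¹)) • f a b α β
      + (if α = β then (1:ℂ) else 0) •
          ∑ γ : Fin n, (if α < γ then
            ((if a = b then (1:ℂ) else (q:ℂ)⁻¹) * -((q:ℂ)⁻¹ ^ 2 - 1)) • f a b γ γ else 0)
      + (if a = b then (1:ℂ) else 0) •
          ∑ c : Fin n, (if a < c then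
            (-((q:ℂ)⁻¹ ^ 2 - 1) * (if α = β then (1:ℂ) else (q:ℂ)⁻¹)) • f c c α β else 0)
      + (if a = b ∧ α = β then (1:ℂ) else 0) •
          ∑ c : Fin n, ∑ γ : Fin n, (if a < c ∧ α < γ then
            (-((q:ℂ)⁻¹ ^ 2 - 1) * -((q:ℂ)⁻¹ ^ 2 - 1)) • f c c γ γ else 0) := by
  have e : ∀ a' b' α' β' : Fin n, (Rmat q b a b' a' * Rmat q β α β' α') • f a' b' α' β'
      = ((if b' = b ∧ a' = a then (if a = b then (1:ℂ) else (q:ℂ)⁻¹) else 0) *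
         (if β' = β ∧ α' = α then (if α = β then (1:ℂ) else (q:ℂ)⁻¹) else 0)) • f a' b' α' β'
      + ((if b' = b ∧ a' = a then (if a = b then (1:ℂ) else (q:ℂ)⁻¹) else 0) *
         (if α = β ∧ α' = β' ∧ α < α' then -((q:ℂ)⁻¹ ^ 2 - 1) else 0)) • f a' b' α' β'
      + ((if a = b ∧ a' = b' ∧ a < a' then -((q:ℂ)⁻¹ ^ 2 - 1) else 0) *
         (if β' = β ∧ α' = α then (if α = β then (1:ℂ) else (q:ℂ)⁻¹) else 0)) • f a' b' α' β'
      + ((if a = b ∧ a' = b' ∧ a < a' then -((q:ℂ)⁻¹ ^ 2 - 1) else 0) *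
         (if α = β ∧ α' = β' ∧ α < α' then -((q:ℂ)⁻¹ ^ 2 - 1) else 0)) • f a' b' α' β' := by
    intro a' b' α' β'
    rw [Rmat_cases q b a b' a', Rmat_cases q β α β' α']
    simp only [add_mul, mul_add, add_smul]
    abel
  simp only [e, Finset.sum_add_distrib]
  rw [pieceA q a b α β f, pieceB q a b α β f, pieceC q a b α β f, pieceD q a b α β f]
end Master
section Target
variable (q : ℝ) (n : ℕ)

lemma relZq (a b α β : Fin n) (h : (a = b ∧ α < β) ∨ (a < b ∧ α = β)) :
    Z q n a α * Z q n b β = (q:ℂ) • (Z q n b β * Z q n a α) := by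
  have := RingQuot.mkAlgHom_rel ℂ (PolRel.zz_q (q := q) a b α β h)
  simpa only [map_mul, map_smul, Z] using this

lemma relZcomm (a b α β : Fin n) (h1 : α < β) (h2 : b < a) :
    Z q n a α * Z q n b β = Z q n b β * Z q n a α := by
  have := RingQuot.mkAlgHom_rel ℂ (PolRel.zz_comm (q := q) a b α β h1 h2)
  simpa only [map_mul, map_smul, Z] using this

lemma relZmix (a b α β : Fin n) (h1 : α < β) (h2 : a < b) :
    Z q n a α * Z q n b β
      = Z q n b β * Z q n a α + ((q:ℂ) - (q:ℂ)⁻¹) • (Z q n a β * Z q n b α) := by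
  have := RingQuot.mkAlgHom_rel ℂ (PolRel.zz_mix (q := q) a b α β h1 h2)
  simpa only [map_mul, map_smul, map_add, Z] using this

lemma relZsq (a b α β : Fin n) (h : (a = b ∧ α < β) ∨ (a < b ∧ α = β)) :
    Zs q n b β * Zs q n a α = (q:ℂ) • (Zs q n a α * Zs q n b β) := by
  have := RingQuot.mkAlgHom_rel ℂ (PolRel.zszs_q (q := q) a b α β h)
  simpa only [map_mul, map_smul, Zs] using this

lemma relZscomm (a b α β : Fin n) (h1 : α < β) (h2 : b < a) :
    Zs q n b β * Zs q n a α = Zs q n a α * Zs q n b β := by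
  have := RingQuot.mkAlgHom_rel ℂ (PolRel.zszs_comm (q := q) a b α β h1 h2)
  simpa only [map_mul, map_smul, Zs] using this

lemma relZsmix (a b α β : Fin n) (h1 : α < β) (h2 : a < b) :
    Zs q n b β * Zs q n a α
      = Zs q n a α * Zs q n b β + ((q:ℂ) - (q:ℂ)⁻¹) • (Zs q n b α * Zs q n a β) := by
  have := RingQuot.mkAlgHom_rel ℂ (PolRel.zszs_mix (q := q) a b α β h1 h2)
  simpa only [map_mul, map_smul, map_add, Zs] using this

lemma relCross (a b α β : Fin n) :
    Zs q n b β * Z q n a α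
      = (q:ℂ) ^ 2 • (∑ a' : Fin n, ∑ b' : Fin n, ∑ α' : Fin n, ∑ β' : Fin n,
            (Rmat q b a b' a' * Rmat q β α β' α') • (Z q n a' α' * Zs q n b' β'))
        + ((1 - (q:ℂ) ^ 2) * (if a = b then 1 else 0) *
            (if α = β then 1 else 0)) • (1 : PolMat q n) := by
  have := RingQuot.mkAlgHom_rel ℂ (PolRel.cross (q := q) a b α β)
  simpa only [map_mul, map_smul, map_add, map_sum, map_one, Z, Zs] using this

end Target

section JnDef
variable (q : ℝ) (N : ℕ)

/-- The image of `z_a^α` under `J`. -/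
def ZT (a α : Fin (N + 1)) : PolMat q N :=
  if h : (a : ℕ) < N ∧ (α : ℕ) < N then ((q : ℂ)⁻¹) • Z q N ⟨a, h.1⟩ ⟨α, h.2⟩
  else if (a : ℕ) = N ∧ (α : ℕ) = N then 1 else 0

/-- The image of `(z_a^α)*` under `J`. -/
def ZST (a α : Fin (N + 1)) : PolMat q N :=
  if h : (a : ℕ) < N ∧ (α : ℕ) < N then ((q : ℂ)⁻¹) • Zs q N ⟨a, h.1⟩ ⟨α, h.2⟩
  else if (a : ℕ) = N ∧ (α : ℕ) = N then 1 else 0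

variable {N}

lemma ZT_lt {a α : Fin (N + 1)} (ha : (a : ℕ) < N) (hα : (α : ℕ) < N) :
    ZT q N a α = ((q : ℂ)⁻¹) • Z q N ⟨a, ha⟩ ⟨α, hα⟩ := dif_pos ⟨ha, hα⟩

lemma ZT_last {a α : Fin (N + 1)} (ha : (a : ℕ) = N) (hα : (α : ℕ) = N) :
    ZT q N a α = 1 := by
  rw [ZT, dif_neg (by omega), if_pos ⟨ha, hα⟩]

lemma ZT_zero₁ {a α : Fin (N + 1)} (ha : (a : ℕ) < N) (hα : (α : ℕ) = N) :
    ZT q N a α = 0 := by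
  rw [ZT, dif_neg (by omega), if_neg (by omega)]

lemma ZT_zero₂ {a α : Fin (N + 1)} (ha : (a : ℕ) = N) (hα : (α : ℕ) < N) :
    ZT q N a α = 0 := by
  rw [ZT, dif_neg (by omega), if_neg (by omega)]

lemma ZST_lt {a α : Fin (N + 1)} (ha : (a : ℕ) < N) (hα : (α : ℕ) < N) :
    ZST q N a α = ((q : ℂ)⁻¹) • Zs q N ⟨a, ha⟩ ⟨α, hα⟩ := dif_pos ⟨ha, hα⟩

lemma ZST_last {a α : Fin (N + 1)} (ha : (a : ℕ) = N) (hα : (α : ℕ) = N) :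
    ZST q N a α = 1 := by
  rw [ZST, dif_neg (by omega), if_pos ⟨ha, hα⟩]

lemma ZST_zero₁ {a α : Fin (N + 1)} (ha : (a : ℕ) < N) (hα : (α : ℕ) = N) :
    ZST q N a α = 0 := by
  rw [ZST, dif_neg (by omega), if_neg (by omega)]

lemma ZST_zero₂ {a α : Fin (N + 1)} (ha : (a : ℕ) = N) (hα : (α : ℕ) < N) :
    ZST q N a α = 0 := by
  rw [ZST, dif_neg (by omega), if_neg (by omega)]

end JnDef
lemma fin_snoc_cases {N : ℕ} (a : Fin (N + 1)) : (a : ℕ) < N ∨ (a : ℕ) = N := by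
  have := a.isLt; omega

section Compat
variable (q : ℝ) {N : ℕ}

lemma compat_zq (a b α β : Fin (N + 1)) (h : (a = b ∧ α < β) ∨ (a < b ∧ α = β)) :
    ZT q N a α * ZT q N b β = (q : ℂ) • (ZT q N b β * ZT q N a α) := by
  rcases fin_snoc_cases a with ha | ha <;>
  rcases fin_snoc_cases b with hb | hb <;>
  rcases fin_snoc_cases α with hα | hα <;>
  rcases fin_snoc_cases β with hβ | hβ <;>
  first
  | (exfalso; simp only [Fin.ext_iff, Fin.lt_def] at h; omega)
  | (rw [ZT_zero₁ q ha hα]; simp)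
  | (rw [ZT_zero₂ q ha hα]; simp)
  | (rw [ZT_zero₁ q hb hβ]; simp)
  | (rw [ZT_zero₂ q hb hβ]; simp)
  | (rw [ZT_lt q ha hα, ZT_lt q hb hβ, smul_mul_smul_comm, smul_mul_smul_comm,
      relZq q N ⟨a, ha⟩ ⟨b, hb⟩ ⟨α, hα⟩ ⟨β, hβ⟩
        (by simp only [Fin.ext_iff, Fin.lt_def, Fin.mk_lt_mk] at h ⊢; omega)]
     module)

lemma compat_zcomm (a b α β : Fin (N + 1)) (h1 : α < β) (h2 : b < a) :
    ZT q N a α * ZT q N b β = ZT q N b β * ZT q N a α := by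
  rcases fin_snoc_cases a with ha | ha <;>
  rcases fin_snoc_cases b with hb | hb <;>
  rcases fin_snoc_cases α with hα | hα <;>
  rcases fin_snoc_cases β with hβ | hβ <;>
  first
  | (exfalso; simp only [Fin.lt_def] at h1 h2; omega)
  | (rw [ZT_zero₁ q ha hα]; simp)
  | (rw [ZT_zero₂ q ha hα]; simp)
  | (rw [ZT_zero₁ q hb hβ]; simp)
  | (rw [ZT_zero₂ q hb hβ]; simp)
  | (rw [ZT_lt q ha hα, ZT_lt q hb hβ, smul_mul_smul_comm, smul_mul_smul_comm,
      relZcomm q N ⟨a, ha⟩ ⟨b, hb⟩ ⟨α, hα⟩ ⟨β, hβ⟩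
        (by simp only [Fin.lt_def] at h1 ⊢; omega)
        (by simp only [Fin.lt_def] at h2 ⊢; omega)])

lemma compat_zmix (a b α β : Fin (N + 1)) (h1 : α < β) (h2 : a < b) :
    ZT q N a α * ZT q N b β
      = ZT q N b β * ZT q N a α + ((q : ℂ) - (q : ℂ)⁻¹) • (ZT q N a β * ZT q N b α) := by
  have ha : (a : ℕ) < N := by have := b.isLt; simp only [Fin.lt_def] at h2; omega
  have hα : (α : ℕ) < N := by have := β.isLt; simp only [Fin.lt_def] at h1; omega
  rcases fin_snoc_cases b with hb | hb <;>
  rcases fin_snoc_cases β with hβ | hβ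
  · rw [ZT_lt q ha hα, ZT_lt q hb hβ, ZT_lt q ha hβ, ZT_lt q hb hα]
    simp only [smul_mul_smul_comm]
    rw [relZmix q N ⟨a, ha⟩ ⟨b, hb⟩ ⟨α, hα⟩ ⟨β, hβ⟩
        (by simp only [Fin.lt_def] at h1 ⊢; omega)
        (by simp only [Fin.lt_def] at h2 ⊢; omega)]
    module
  · rw [ZT_zero₁ q hb hβ, ZT_zero₁ q ha hβ]; simp
  · rw [ZT_zero₂ q hb hβ, ZT_zero₂ q hb hα]; simp
  · rw [ZT_last q hb hβ, ZT_zero₁ q ha hβ, ZT_zero₂ q hb hα]; simp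

lemma compat_zsq (a b α β : Fin (N + 1)) (h : (a = b ∧ α < β) ∨ (a < b ∧ α = β)) :
    ZST q N b β * ZST q N a α = (q : ℂ) • (ZST q N a α * ZST q N b β) := by
  rcases fin_snoc_cases a with ha | ha <;>
  rcases fin_snoc_cases b with hb | hb <;>
  rcases fin_snoc_cases α with hα | hα <;>
  rcases fin_snoc_cases β with hβ | hβ <;>
  first
  | (exfalso; simp only [Fin.ext_iff, Fin.lt_def] at h; omega)
  | (rw [ZST_zero₁ q ha hα]; simp)
  | (rw [ZST_zero₂ q ha hα]; simp)
  | (rw [ZST_zero₁ q hb hβ]; simp)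
  | (rw [ZST_zero₂ q hb hβ]; simp)
  | (rw [ZST_lt q ha hα, ZST_lt q hb hβ, smul_mul_smul_comm, smul_mul_smul_comm,
      relZsq q N ⟨a, ha⟩ ⟨b, hb⟩ ⟨α, hα⟩ ⟨β, hβ⟩
        (by simp only [Fin.ext_iff, Fin.lt_def, Fin.mk_lt_mk] at h ⊢; omega)]
     module)

lemma compat_zscomm (a b α β : Fin (N + 1)) (h1 : α < β) (h2 : b < a) :
    ZST q N b β * ZST q N a α = ZST q N a α * ZST q N b β := by
  rcases fin_snoc_cases a with ha | ha <;>
  rcases fin_snoc_cases b with hb | hb <;>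
  rcases fin_snoc_cases α with hα | hα <;>
  rcases fin_snoc_cases β with hβ | hβ <;>
  first
  | (exfalso; simp only [Fin.lt_def] at h1 h2; omega)
  | (rw [ZST_zero₁ q ha hα]; simp)
  | (rw [ZST_zero₂ q ha hα]; simp)
  | (rw [ZST_zero₁ q hb hβ]; simp)
  | (rw [ZST_zero₂ q hb hβ]; simp)
  | (rw [ZST_lt q ha hα, ZST_lt q hb hβ, smul_mul_smul_comm, smul_mul_smul_comm,
      relZscomm q N ⟨a, ha⟩ ⟨b, hb⟩ ⟨α, hα⟩ ⟨β, hβ⟩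
        (by simp only [Fin.lt_def] at h1 ⊢; omega)
        (by simp only [Fin.lt_def] at h2 ⊢; omega)])

lemma compat_zsmix (a b α β : Fin (N + 1)) (h1 : α < β) (h2 : a < b) :
    ZST q N b β * ZST q N a α
      = ZST q N a α * ZST q N b β + ((q : ℂ) - (q : ℂ)⁻¹) • (ZST q N b α * ZST q N a β) := by
  have ha : (a : ℕ) < N := by have := b.isLt; simp only [Fin.lt_def] at h2; omega
  have hα : (α : ℕ) < N := by have := β.isLt; simp only [Fin.lt_def] at h1; omega
  rcases fin_snoc_cases b with hb | hb <;>
  rcases fin_snoc_cases β with hβ | hβ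
  · rw [ZST_lt q ha hα, ZST_lt q hb hβ, ZST_lt q ha hβ, ZST_lt q hb hα]
    simp only [smul_mul_smul_comm]
    rw [relZsmix q N ⟨a, ha⟩ ⟨b, hb⟩ ⟨α, hα⟩ ⟨β, hβ⟩
        (by simp only [Fin.lt_def] at h1 ⊢; omega)
        (by simp only [Fin.lt_def] at h2 ⊢; omega)]
    module
  · rw [ZST_zero₁ q hb hβ, ZST_zero₁ q ha hβ]; simp
  · rw [ZST_zero₂ q hb hβ, ZST_zero₂ q hb hα]; simp
  · rw [ZST_last q hb hβ, ZST_zero₁ q ha hβ, ZST_zero₂ q hb hα]; simp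

end Compat
section SumHelp
variable {M : Type} [AddCommMonoid M] {N : ℕ}

lemma sum_only_last (g : Fin (N + 1) → M) (h : ∀ x : Fin (N + 1), (x : ℕ) < N → g x = 0) :
    ∑ x, g x = g (Fin.last N) := by
  rw [Fin.sum_univ_castSucc, Finset.sum_eq_zero, zero_add]
  intro i _
  exact h _ (by simp [Fin.is_lt])

lemma sum_drop_last (g : Fin (N + 1) → M) (h : g (Fin.last N) = 0) :
    ∑ x, g x = ∑ x : Fin N, g x.castSucc := by
  rw [Fin.sum_univ_castSucc, h, add_zero]

lemma lt_last_of_lt {a : Fin (N + 1)} (ha : (a : ℕ) < N) : a < Fin.last N := by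
  simp [Fin.lt_def, ha]

lemma not_lt_of_last {a : Fin (N + 1)} (ha : (a : ℕ) = N) (γ : Fin (N + 1)) : ¬ a < γ := by
  have := γ.isLt; simp only [Fin.lt_def]; omega

end SumHelp
section Cross
variable (q : ℝ) {N : ℕ}

set_option maxHeartbeats 1000000 in
lemma compat_cross (hq : (q : ℂ) ≠ 0) (a b α β : Fin (N + 1)) :
    ZST q N b β * ZT q N a α
      = (q : ℂ) ^ 2 • (∑ a' : Fin (N + 1), ∑ b' : Fin (N + 1), ∑ α' : Fin (N + 1),
            ∑ β' : Fin (N + 1),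
            (Rmat q b a b' a' * Rmat q β α β' α') • (ZT q N a' α' * ZST q N b' β'))
        + ((1 - (q : ℂ) ^ 2) * (if a = b then 1 else 0) * (if α = β then 1 else 0))
            • (1 : PolMat q N) := by
  simp only [sum_R_contract]
  rcases fin_snoc_cases a with ha | ha <;>
  rcases fin_snoc_cases b with hb | hb <;>
  rcases fin_snoc_cases α with hα | hα <;>
  rcases fin_snoc_cases β with hβ | hβ
  · -- 1 : SS-SS
    rw [ZST_lt q hb hβ, ZT_lt q ha hα, smul_mul_smul_comm,
      relCross q N ⟨a, ha⟩ ⟨b, hb⟩ ⟨α, hα⟩ ⟨β, hβ⟩]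
    simp only [sum_R_contract, smul_mul_smul_comm]
    have hE2 : ∀ C : ℂ, (∑ γ : Fin (N + 1), if α < γ then C • (ZT q N a γ * ZST q N b γ) else 0)
        = ((q : ℂ)⁻¹ * (q : ℂ)⁻¹) • ∑ γ : Fin N,
            (if (⟨(α : ℕ), hα⟩ : Fin N) < γ then
              C • (Z q N ⟨(a : ℕ), ha⟩ γ * Zs q N ⟨(b : ℕ), hb⟩ γ) else 0) := by
      intro C
      rw [Fin.sum_univ_castSucc]
      rw [show (if α < Fin.last N then C • (ZT q N a (Fin.last N) * ZST q N b (Fin.last N))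
          else 0) = 0 by rw [ZT_zero₁ q ha (Fin.val_last N)]; simp]
      rw [add_zero, Finset.smul_sum]
      refine Finset.sum_congr rfl fun γ _ => ?_
      rw [ZT_lt q ha (by simp), ZST_lt q hb (by simp)]
      by_cases h : (α : ℕ) < (γ : ℕ)
      · rw [if_pos (by simp [Fin.lt_def, h]), if_pos (by simp [Fin.lt_def, h]),
          smul_mul_smul_comm]
        simp only [Fin.coe_castSucc, Fin.eta]
        module
      · rw [if_neg (by simp [Fin.lt_def, h]), if_neg (by simp [Fin.lt_def, h]), smul_zero]
    have hE3 : ∀ C : ℂ, (∑ c : Fin (N + 1), if a < c then C • (ZT q N c α * ZST q N c β) else 0)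
        = ((q : ℂ)⁻¹ * (q : ℂ)⁻¹) • ∑ c : Fin N,
            (if (⟨(a : ℕ), ha⟩ : Fin N) < c then
              C • (Z q N c ⟨(α : ℕ), hα⟩ * Zs q N c ⟨(β : ℕ), hβ⟩) else 0) := by
      intro C
      rw [Fin.sum_univ_castSucc]
      rw [show (if a < Fin.last N then C • (ZT q N (Fin.last N) α * ZST q N (Fin.last N) β)
          else 0) = 0 by rw [ZT_zero₂ q (Fin.val_last N) hα]; simp]
      rw [add_zero, Finset.smul_sum]
      refine Finset.sum_congr rfl fun c _ => ?_
      rw [ZT_lt q (by simp) hα, ZST_lt q (by simp) hβ]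
      by_cases h : (a : ℕ) < (c : ℕ)
      · rw [if_pos (by simp [Fin.lt_def, h]), if_pos (by simp [Fin.lt_def, h]),
          smul_mul_smul_comm]
        simp only [Fin.coe_castSucc, Fin.eta]
        module
      · rw [if_neg (by simp [Fin.lt_def, h]), if_neg (by simp [Fin.lt_def, h]), smul_zero]
    have hE4 : ∀ C : ℂ, (∑ c : Fin (N + 1), ∑ γ : Fin (N + 1),
          if a < c ∧ α < γ then C • (ZT q N c γ * ZST q N c γ) else 0)
        = ((q : ℂ)⁻¹ * (q : ℂ)⁻¹) • (∑ c : Fin N, ∑ γ : Fin N,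
            (if (⟨(a : ℕ), ha⟩ : Fin N) < c ∧ (⟨(α : ℕ), hα⟩ : Fin N) < γ then
              C • (Z q N c γ * Zs q N c γ) else 0)) + C • 1 := by
      intro C
      rw [Fin.sum_univ_castSucc]
      have hlast : (∑ γ : Fin (N + 1), if a < Fin.last N ∧ α < γ then
          C • (ZT q N (Fin.last N) γ * ZST q N (Fin.last N) γ) else 0) = C • 1 := by
        rw [sum_only_last _ (fun x hx => by rw [ZT_zero₂ q (Fin.val_last N) hx]; simp)]
        rw [if_pos ⟨lt_last_of_lt ha, lt_last_of_lt hα⟩,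
          ZT_last q (Fin.val_last N) (Fin.val_last N),
          ZST_last q (Fin.val_last N) (Fin.val_last N), mul_one]
      rw [hlast]
      congr 1
      have hsmall : ∀ c : Fin N, (∑ γ : Fin (N + 1),
          if a < Fin.castSucc c ∧ α < γ then
            C • (ZT q N (Fin.castSucc c) γ * ZST q N (Fin.castSucc c) γ) else 0)
          = ((q : ℂ)⁻¹ * (q : ℂ)⁻¹) • ∑ γ : Fin N,
              (if (⟨(a : ℕ), ha⟩ : Fin N) < c ∧ (⟨(α : ℕ), hα⟩ : Fin N) < γ then
                C • (Z q N c γ * Zs q N c γ) else 0) := by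
        intro c
        rw [Fin.sum_univ_castSucc]
        rw [show (if a < Fin.castSucc c ∧ α < Fin.last N then
            C • (ZT q N (Fin.castSucc c) (Fin.last N) * ZST q N (Fin.castSucc c) (Fin.last N))
            else 0) = 0 by rw [ZT_zero₁ q (by simp) (Fin.val_last N)]; simp]
        rw [add_zero, Finset.smul_sum]
        refine Finset.sum_congr rfl fun γ _ => ?_
        by_cases h : (a : ℕ) < (c : ℕ) ∧ (α : ℕ) < (γ : ℕ)
        · rw [if_pos (by simp [Fin.lt_def]; omega), if_pos (by simp [Fin.lt_def]; omega),
            ZT_lt q (by simp) (by simp), ZST_lt q (by simp) (by simp), smul_mul_smul_comm]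
          simp only [Fin.coe_castSucc, Fin.eta]
          module
        · rw [if_neg (by simp [Fin.lt_def]; omega), if_neg (by simp [Fin.lt_def]; omega),
            smul_zero]
      rw [Finset.sum_congr rfl fun c _ => hsmall c, ← Finset.smul_sum]
    by_cases hab : (a : ℕ) = (b : ℕ) <;> by_cases hαβ : (α : ℕ) = (β : ℕ)
    · have e1 : a = b := Fin.ext hab
      subst e1
      have e2 : α = β := Fin.ext hαβ
      subst e2
      simp only [Fin.mk.injEq, if_pos rfl, and_self, if_true, eq_self_iff_true, one_mul, mul_one]
      rw [hE2, hE3, hE4]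
      match_scalars <;> field_simp <;> ring
    · have e1 : a = b := Fin.ext hab
      subst e1
      have ne2 : ¬ α = β := fun h => hαβ (congrArg Fin.val h)
      have ne2' : ¬ (⟨(α : ℕ), hα⟩ : Fin N) = ⟨(β : ℕ), hβ⟩ := by
        simp only [ne_eq, Fin.mk.injEq]; omega
      simp only [ne2, ne2', Fin.mk.injEq, if_pos rfl, and_self, if_true, if_false,
        eq_self_iff_true, one_mul, mul_one, and_false, false_and, zero_smul, smul_zero,
        add_zero, zero_add, mul_zero, zero_mul]
      rw [hE3]
      match_scalars <;> field_simp <;> ring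
    · have ne1 : ¬ a = b := fun h => hab (congrArg Fin.val h)
      have ne1' : ¬ (⟨(a : ℕ), ha⟩ : Fin N) = ⟨(b : ℕ), hb⟩ := by
        simp only [ne_eq, Fin.mk.injEq]; omega
      have e2 : α = β := Fin.ext hαβ
      subst e2
      simp only [ne1, ne1', Fin.mk.injEq, if_pos rfl, and_self, if_true, if_false,
        eq_self_iff_true, one_mul, mul_one, and_false, false_and, zero_smul, smul_zero,
        add_zero, zero_add, mul_zero, zero_mul]
      rw [hE2]
      match_scalars <;> field_simp <;> ring
    · have ne1 : ¬ a = b := fun h => hab (congrArg Fin.val h)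
      have ne1' : ¬ (⟨(a : ℕ), ha⟩ : Fin N) = ⟨(b : ℕ), hb⟩ := by
        simp only [ne_eq, Fin.mk.injEq]; omega
      have ne2 : ¬ α = β := fun h => hαβ (congrArg Fin.val h)
      have ne2' : ¬ (⟨(α : ℕ), hα⟩ : Fin N) = ⟨(β : ℕ), hβ⟩ := by
        simp only [ne_eq, Fin.mk.injEq]; omega
      simp only [ne1, ne1', ne2, ne2', if_false, and_false, false_and, zero_smul, smul_zero,
        add_zero, zero_add, mul_zero, zero_mul, ite_false]
      match_scalars <;> field_simp <;> ring
  · -- 2 : a<,b<,α<,β=N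
    have hαβ : α ≠ β := by simp only [ne_eq, Fin.ext_iff]; omega
    have hZb : ZST q N b β = 0 := ZST_zero₁ q hb hβ
    have hS3 : ∀ C : ℂ, (∑ c : Fin (N + 1),
        if a < c then C • (ZT q N c α * ZST q N c β) else 0) = 0 := by
      intro C
      refine Finset.sum_eq_zero fun c _ => ?_
      rcases fin_snoc_cases c with h | h
      · rw [ZST_zero₁ q h hβ]; simp
      · rw [ZT_zero₂ q h hα]; simp
    simp [hZb, hαβ, hS3]
  · -- 3 : a<,b<,α=N,β<
    have hαβ : α ≠ β := by simp only [ne_eq, Fin.ext_iff]; omega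
    have hZa : ZT q N a α = 0 := ZT_zero₁ q ha hα
    have hS3 : ∀ C : ℂ, (∑ c : Fin (N + 1),
        if a < c then C • (ZT q N c α * ZST q N c β) else 0) = 0 := by
      intro C
      refine Finset.sum_eq_zero fun c _ => ?_
      rcases fin_snoc_cases c with h | h
      · rw [ZT_zero₁ q h hα]; simp
      · rw [ZST_zero₂ q h hβ]; simp
    simp [hZa, hαβ, hS3]
  · -- 4 : a<,b<,α=N,β=N
    have hαβ : α = β := Fin.ext (by omega)
    subst hαβ
    have hZa : ZT q N a α = 0 := ZT_zero₁ q ha hα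
    have hZb : ZST q N b α = 0 := ZST_zero₁ q hb hα
    have hS2 : ∀ C : ℂ, (∑ γ : Fin (N + 1),
        if α < γ then C • (ZT q N a γ * ZST q N b γ) else 0) = 0 := by
      intro C
      exact Finset.sum_eq_zero fun γ _ => if_neg (not_lt_of_last hα γ)
    have hS4 : ∀ C : ℂ, (∑ c : Fin (N + 1), ∑ γ : Fin (N + 1),
        if a < c ∧ α < γ then C • (ZT q N c γ * ZST q N c γ)
        else 0) = 0 := by
      intro C
      refine Finset.sum_eq_zero fun c _ => Finset.sum_eq_zero fun γ _ => ?_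
      exact if_neg fun h => not_lt_of_last hα γ h.2
    have hS3 : ∀ C : ℂ, (∑ c : Fin (N + 1),
        if a < c then C • (ZT q N c α * ZST q N c α) else 0) = C • 1 := by
      intro C
      rw [sum_only_last]
      · rw [if_pos (lt_last_of_lt ha), ZT_last q (by simp) hα, ZST_last q (by simp) hα,
          one_mul]
      · intro x hx
        rw [ZT_zero₁ q hx hα]; simp
    by_cases hab : a = b
    · subst hab
      simp [hZa, hZb, hS2, hS3, hS4, smul_smul]
      match_scalars <;> (field_simp; try ring)
    · simp [hab, hZa, hZb, hS2, hS3, hS4]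
  · -- 5 : a<,b=N,α<,β<
    have hab : a ≠ b := by simp only [ne_eq, Fin.ext_iff]; omega
    have hZb : ZST q N b β = 0 := ZST_zero₂ q hb hβ
    have hS2 : ∀ C : ℂ, (∑ γ : Fin (N + 1),
        if α < γ then C • (ZT q N a γ * ZST q N b γ) else 0) = 0 := by
      intro C
      refine Finset.sum_eq_zero fun γ _ => ?_
      rcases fin_snoc_cases γ with h | h
      · rw [ZST_zero₂ q hb h]; simp
      · rw [ZT_zero₁ q ha h]; simp
    simp [hab, hZb, hS2]
  · -- 6 : a<,b=N,α<,β=N  (SS-LL)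
    have hab : a ≠ b := by simp only [ne_eq, Fin.ext_iff]; omega
    have hαβ : α ≠ β := by simp only [ne_eq, Fin.ext_iff]; omega
    have hZa : ZT q N a α = ((q : ℂ)⁻¹) • Z q N ⟨a, ha⟩ ⟨α, hα⟩ := ZT_lt q ha hα
    have hZb : ZST q N b β = 1 := ZST_last q hb hβ
    simp [hab, hαβ, hZa, hZb, smul_smul]
    match_scalars <;> (field_simp; try ring)
  · -- 7 : a<,b=N,α=N,β<
    have hab : a ≠ b := by simp only [ne_eq, Fin.ext_iff]; omega
    have hαβ : α ≠ β := by simp only [ne_eq, Fin.ext_iff]; omega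
    have hZa : ZT q N a α = 0 := ZT_zero₁ q ha hα
    have hZb : ZST q N b β = 0 := ZST_zero₂ q hb hβ
    simp [hab, hαβ, hZa, hZb]
  · -- 8 : a<,b=N,α=N,β=N
    have hab : a ≠ b := by simp only [ne_eq, Fin.ext_iff]; omega
    have hαβ : α = β := Fin.ext (by omega)
    subst hαβ
    have hZa : ZT q N a α = 0 := ZT_zero₁ q ha hα
    have hZb : ZST q N b α = 1 := ZST_last q hb hα
    have hS2 : ∀ C : ℂ, (∑ γ : Fin (N + 1),
        if α < γ then C • (ZT q N a γ * ZST q N b γ) else 0) = 0 := by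
      intro C
      exact Finset.sum_eq_zero fun γ _ => if_neg (not_lt_of_last hα γ)
    simp [hab, hZa, hZb, hS2]
  · -- 9 : a=N,b<,α<,β<
    have hab : a ≠ b := by simp only [ne_eq, Fin.ext_iff]; omega
    have hZa : ZT q N a α = 0 := ZT_zero₂ q ha hα
    have hS2 : ∀ C : ℂ, (∑ γ : Fin (N + 1),
        if α < γ then C • (ZT q N a γ * ZST q N b γ) else 0) = 0 := by
      intro C
      refine Finset.sum_eq_zero fun γ _ => ?_
      rcases fin_snoc_cases γ with h | h
      · rw [ZT_zero₂ q ha h]; simp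
      · rw [ZST_zero₁ q hb h]; simp
    simp [hab, hZa, hS2]
  · -- 10 : a=N,b<,α<,β=N
    have hab : a ≠ b := by simp only [ne_eq, Fin.ext_iff]; omega
    have hαβ : α ≠ β := by simp only [ne_eq, Fin.ext_iff]; omega
    have hZa : ZT q N a α = 0 := ZT_zero₂ q ha hα
    have hZb : ZST q N b β = 0 := ZST_zero₁ q hb hβ
    simp [hab, hαβ, hZa, hZb]
  · -- 11 : a=N,b<,α=N,β<  (LL-SS)
    have hab : a ≠ b := by simp only [ne_eq, Fin.ext_iff]; omega
    have hαβ : α ≠ β := by simp only [ne_eq, Fin.ext_iff]; omega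
    have hZa : ZT q N a α = 1 := ZT_last q ha hα
    have hZb : ZST q N b β = ((q : ℂ)⁻¹) • Zs q N ⟨b, hb⟩ ⟨β, hβ⟩ := ZST_lt q hb hβ
    simp [hab, hαβ, hZa, hZb, smul_smul]
    match_scalars <;> (field_simp; try ring)
  · -- 12 : a=N,b<,α=N,β=N
    have hab : a ≠ b := by simp only [ne_eq, Fin.ext_iff]; omega
    have hαβ : α = β := Fin.ext (by omega)
    subst hαβ
    have hZa : ZT q N a α = 1 := ZT_last q ha hα
    have hZb : ZST q N b α = 0 := ZST_zero₁ q hb hα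
    have hS2 : ∀ C : ℂ, (∑ γ : Fin (N + 1),
        if α < γ then C • (ZT q N a γ * ZST q N b γ) else 0) = 0 := by
      intro C
      exact Finset.sum_eq_zero fun γ _ => if_neg (not_lt_of_last hα γ)
    simp [hab, hZa, hZb, hS2]
  · -- 13 : a=N,b=N,α<,β<
    have hab : a = b := Fin.ext (by omega)
    subst hab
    have hZa : ZT q N a α = 0 := ZT_zero₂ q ha hα
    have hZb : ZST q N a β = 0 := ZST_zero₂ q ha hβ
    have hS3 : ∀ C : ℂ, (∑ c : Fin (N + 1),
        if a < c then C • (ZT q N c α * ZST q N c β) else 0) = 0 := by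
      intro C
      exact Finset.sum_eq_zero fun c _ => if_neg (not_lt_of_last ha c)
    have hS4 : ∀ C : ℂ, (∑ c : Fin (N + 1), ∑ γ : Fin (N + 1),
        if a < c ∧ α < γ then C • (ZT q N c γ * ZST q N c γ)
        else 0) = 0 := by
      intro C
      refine Finset.sum_eq_zero fun c _ => Finset.sum_eq_zero fun γ _ => ?_
      exact if_neg fun h => not_lt_of_last ha c h.1
    by_cases hαβ : α = β
    · subst hαβ
      have hS2 : ∀ C : ℂ, (∑ γ : Fin (N + 1),
          if α < γ then C • (ZT q N a γ * ZST q N a γ) else 0) = C • 1 := by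
        intro C
        rw [sum_only_last]
        · rw [if_pos (lt_last_of_lt hα), ZT_last q ha (by simp), ZST_last q ha (by simp),
            one_mul]
        · intro x hx
          rw [ZT_zero₂ q ha hx]; simp
      simp [hZa, hZb, hS2, hS3, hS4, smul_smul]
      match_scalars <;> (field_simp; try ring)
    · simp [hαβ, hZa, hZb, hS3, hS4]
  · -- 14 : a=N,b=N,α<,β=N
    have hab : a = b := Fin.ext (by omega)
    subst hab
    have hαβ : α ≠ β := by simp only [ne_eq, Fin.ext_iff]; omega
    have hZa : ZT q N a α = 0 := ZT_zero₂ q ha hα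
    have hZb : ZST q N a β = 1 := ZST_last q ha hβ
    have hS3 : ∀ C : ℂ, (∑ c : Fin (N + 1),
        if a < c then C • (ZT q N c α * ZST q N c β) else 0) = 0 := by
      intro C
      exact Finset.sum_eq_zero fun c _ => if_neg (not_lt_of_last ha c)
    simp [hαβ, hZa, hZb, hS3]
  · -- 15 : a=N,b=N,α=N,β<
    have hab : a = b := Fin.ext (by omega)
    subst hab
    have hαβ : α ≠ β := by simp only [ne_eq, Fin.ext_iff]; omega
    have hZa : ZT q N a α = 1 := ZT_last q ha hα
    have hZb : ZST q N a β = 0 := ZST_zero₂ q ha hβ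
    have hS3 : ∀ C : ℂ, (∑ c : Fin (N + 1),
        if a < c then C • (ZT q N c α * ZST q N c β) else 0) = 0 := by
      intro C
      exact Finset.sum_eq_zero fun c _ => if_neg (not_lt_of_last ha c)
    simp [hαβ, hZa, hZb, hS3]
  · -- 16 : all = N
    have hab : a = b := Fin.ext (by omega)
    subst hab
    have hαβ : α = β := Fin.ext (by omega)
    subst hαβ
    have hZa : ZT q N a α = 1 := ZT_last q ha hα
    have hS2 : ∀ C : ℂ, (∑ γ : Fin (N + 1),
        if α < γ then C • (ZT q N a γ * ZST q N a γ) else 0) = 0 := by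
      intro C
      exact Finset.sum_eq_zero fun γ _ => if_neg (not_lt_of_last hα γ)
    have hS3 : ∀ C : ℂ, (∑ c : Fin (N + 1),
        if a < c then C • (ZT q N c α * ZST q N c α) else 0) = 0 := by
      intro C
      exact Finset.sum_eq_zero fun c _ => if_neg (not_lt_of_last ha c)
    have hS4 : ∀ C : ℂ, (∑ c : Fin (N + 1), ∑ γ : Fin (N + 1),
        if a < c ∧ α < γ then C • (ZT q N c γ * ZST q N c γ)
        else 0) = 0 := by
      intro C
      refine Finset.sum_eq_zero fun c _ => Finset.sum_eq_zero fun γ _ => ?_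
      exact if_neg fun h => not_lt_of_last ha c h.1
    have hZST : ZST q N a α = 1 := ZST_last q ha hα
    simp [hZa, hZST, hS2, hS3, hS4]
    try match_scalars <;> (field_simp; try ring)
end Cross
/-- For `n > 1`, the assignment
`z_a^α ↦ q^{−1} z_a^α` (for `a, α ≤ n−1`), `z_n^n ↦ 1`, other generators `↦ 0`
(with the conjugate assignment on starred generators) extends uniquely to a unital
`*`-algebra homomorphism `J_n : Pol(Mat_n)_q → Pol(Mat_{n−1})_q`.  (A `*`-algebra
homomorphism is a unital algebra homomorphism commuting with the involutions;
since the involutions interchange the generators `z_a^α` and `(z_a^α)*`, this is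
expressed by prescribing the values on both families of generators.) -/
theorem exists_unique_Jn (q : ℝ) (hq0 : 0 < q) (hq1 : q < 1) (n : ℕ) (hn : 1 < n) :
    ∃! φ : PolMat q n →ₐ[ℂ] PolMat q (n - 1),
      (∀ a α : Fin n,
        φ (Z q n a α) =
          if h : (a : ℕ) < n - 1 ∧ (α : ℕ) < n - 1 then
            ((q : ℂ)⁻¹) • Z q (n - 1) ⟨a, h.1⟩ ⟨α, h.2⟩
          else if (a : ℕ) = n - 1 ∧ (α : ℕ) = n - 1 then 1 else 0) ∧
      (∀ a α : Fin n,
        φ (Zs q n a α) =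
          if h : (a : ℕ) < n - 1 ∧ (α : ℕ) < n - 1 then
            ((q : ℂ)⁻¹) • Zs q (n - 1) ⟨a, h.1⟩ ⟨α, h.2⟩
          else if (a : ℕ) = n - 1 ∧ (α : ℕ) = n - 1 then 1 else 0) := by
  obtain ⟨N, rfl⟩ : ∃ N, n = N + 1 := ⟨n - 1, by omega⟩
  have hq : (q : ℂ) ≠ 0 := Complex.ofReal_ne_zero.mpr (ne_of_gt hq0)
  set fgen : PolGen (N + 1) → PolMat q N := fun g =>
    match g with
    | .z a α => ZT q N a α
    | .zs a α => ZST q N a α with hfgen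
  set F : FreePol (N + 1) →ₐ[ℂ] PolMat q N := FreeAlgebra.lift ℂ fgen with hF
  have hFz : ∀ a α : Fin (N + 1), F (gz a α) = ZT q N a α := fun a α => by
    rw [hF, gz, FreeAlgebra.lift_ι_apply]
  have hFzs : ∀ a α : Fin (N + 1), F (gzs a α) = ZST q N a α := fun a α => by
    rw [hF, gzs, FreeAlgebra.lift_ι_apply]
  have hrel : ∀ ⦃x y : FreePol (N + 1)⦄, PolRel q (N + 1) x y → F x = F y := by
    intro x y h
    induction h with
    | zz_q a b α β h =>
        simp only [map_mul, map_smul, hFz]; exact compat_zq q a b α β h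
    | zz_comm a b α β h1 h2 =>
        simp only [map_mul, hFz]; exact compat_zcomm q a b α β h1 h2
    | zz_mix a b α β h1 h2 =>
        simp only [map_mul, map_add, map_smul, hFz]; exact compat_zmix q a b α β h1 h2
    | zszs_q a b α β h =>
        simp only [map_mul, map_smul, hFzs]; exact compat_zsq q a b α β h
    | zszs_comm a b α β h1 h2 =>
        simp only [map_mul, hFzs]; exact compat_zscomm q a b α β h1 h2
    | zszs_mix a b α β h1 h2 =>
        simp only [map_mul, map_add, map_smul, hFzs]; exact compat_zsmix q a b α β h1 h2
    | cross a b α β =>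
        simp only [map_mul, map_add, map_smul, map_sum, map_one, hFz, hFzs]
        exact compat_cross q hq a b α β
  set φ : PolMat q (N + 1) →ₐ[ℂ] PolMat q N :=
    RingQuot.liftAlgHom ℂ ⟨F, hrel⟩ with hφ
  have hφz : ∀ a α : Fin (N + 1), φ (Z q (N + 1) a α) = ZT q N a α := fun a α => by
    rw [hφ, Z, RingQuot.liftAlgHom_mkAlgHom_apply]; exact hFz a α
  have hφzs : ∀ a α : Fin (N + 1), φ (Zs q (N + 1) a α) = ZST q N a α := fun a α => by
    rw [hφ, Zs, RingQuot.liftAlgHom_mkAlgHom_apply]; exact hFzs a α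
  refine ⟨φ, ⟨fun a α => (hφz a α).trans rfl, fun a α => (hφzs a α).trans rfl⟩, ?_⟩
  rintro ψ ⟨h1, h2⟩
  refine RingQuot.ringQuot_ext' ℂ ψ φ (FreeAlgebra.hom_ext (funext fun g => ?_))
  cases g with
  | z a α =>
      show ψ (Z q (N + 1) a α) = φ (Z q (N + 1) a α)
      rw [hφz a α, h1 a α]; rfl
  | zs a α =>
      show ψ (Zs q (N + 1) a α) = φ (Zs q (N + 1) a α)
      rw [hφzs a α, h2 a α]; rfl

end
end
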